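/- The inclusion S_I ⊆ S* can be strict: there exists a network with three players and arcs (2,1), (2,3), with θ_i = 0, L_i = 1 for all i and ξ_{21} = ξ_{23} = 2, such that the independently secured set is {2} while the network-optimal secured set is {1, 2, 3}. -/

import Mathlib

open Finset

/-- In-neighbors of `i`: players `j` with an arc `(j, i)`. -/
def inN {V : Type*} [Fintype V] (A : V → V → Prop) [DecidableRel A] (i : V) : Finset V :=
  Finset.univ.filter fun j => A j i

/-- Total network security cost when exactly the players in `S` are secured. -/
noncomputable def netCost {V : Type*} [Fintype V] [DecidableEq V]
    (A : V → V → Prop) [DecidableRel A] (θ L : V → ℝ) (ξ : V → V → ℝ)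
    (S : Finset V) : ℝ :=
  ∑ i ∈ S, (θ i + ∑ j ∈ inN A i \ S, ξ j i) + ∑ i ∈ Finset.univ \ S, L i

/-- the inclusion `S_I ⊆ S*` can be strict.  With three players
`0, 1, 2` (playing the roles of players 1, 2, 3), arcs `(1,0)` and `(1,2)`,
`θ_i = 0`, `L_i = 1` and `ξ = 2` on the arcs, the independently secured set is
`{1}` while the (unique) network-optimal secured set is all of `{0, 1, 2}`. -/
theorem indep_strict_subset_example
    (A : Fin 3 → Fin 3 → Prop) [DecidableRel A]
    (hA : ∀ j i, A j i ↔ ((j, i) = ((1 : Fin 3), (0 : Fin 3)) ∨ (j, i) = (1, 2)))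
    (θ L : Fin 3 → ℝ) (ξ : Fin 3 → Fin 3 → ℝ)
    (hθ : ∀ i, θ i = 0) (hL : ∀ i, L i = 1) (hξ : ∀ i j, ξ i j = 2) :
    (Finset.univ.filter
        (fun i => θ i + ∑ j ∈ inN A i, ξ j i ≤ L i) = {(1 : Fin 3)}) ∧
    (∀ S : Finset (Fin 3), netCost A θ L ξ Finset.univ ≤ netCost A θ L ξ S) ∧
    (∀ S : Finset (Fin 3), S ≠ Finset.univ →
        netCost A θ L ξ Finset.univ < netCost A θ L ξ S) := by
  have hin : ∀ i, inN A i = Finset.univ.filter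
      (fun j => (j, i) = ((1 : Fin 3), (0 : Fin 3)) ∨ (j, i) = (1, 2)) := by
    intro i; simp [inN, hA]
  have hsd : ∀ s : Finset (Fin 3), s \ Finset.univ = ∅ :=
    fun s => Finset.sdiff_eq_empty_iff_subset.mpr (Finset.subset_univ s)
  have huniv : netCost A θ L ξ Finset.univ = 0 := by
    simp [netCost, hθ, hL, hsd]
  have key : ∀ S : Finset (Fin 3), S ≠ Finset.univ → 0 < netCost A θ L ξ S := by
    intro S hS
    have h1 : (0 : ℝ) ≤ ∑ i ∈ S, (θ i + ∑ j ∈ inN A i \ S, ξ j i) := by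
      refine Finset.sum_nonneg fun i _ => ?_
      rw [hθ]
      have := Finset.sum_nonneg (s := inN A i \ S) (f := fun j => ξ j i)
        (fun j _ => by simp [hξ])
      linarith
    have hne : (Finset.univ \ S).Nonempty := by
      rw [Finset.sdiff_nonempty]
      exact fun h => hS (Finset.univ_subset_iff.mp h)
    have h2 : (1 : ℝ) ≤ ∑ i ∈ Finset.univ \ S, L i := by
      simp only [hL, Finset.sum_const, nsmul_eq_mul, mul_one]
      exact_mod_cast Finset.card_pos.mpr hne
    unfold netCost
    linarith
  refine ⟨?_, ?_, ?_⟩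
  · ext i
    fin_cases i <;>
      simp [hin, hθ, hL, hξ, Fin.sum_univ_three, Finset.filter_insert,
        Finset.filter_singleton, Finset.filter_eq']
  · intro S
    rcases eq_or_ne S Finset.univ with rfl | h
    · exact le_refl _
    · rw [huniv]; exact (key S h).le
  · intro S h; rw [huniv]; exact key S h
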